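/- Let n and α be positive integers with α < n. Let G be a connected graph of order n and independence number α whose vertex set is the disjoint union of the vertex sets of α cliques C_0,…,C_{α−1}, such that every edge of G that does not lie inside one of these cliques is incident with a fixed vertex x_0 ∈ C_0, and x_0 has exactly one neighbor in each of the cliques C_1,…,C_{α−1}. Then ♯α(G) ≤ f(n,α). -/

import Mathlib

open Finset

/-- A finset of vertices is independent in `G`: pairwise non-adjacent. -/
def IsIndepFinset {V : Type*} (G : SimpleGraph V) (s : Finset V) : Prop :=
  ∀ ⦃u⦄, u ∈ s → ∀ ⦃v⦄, v ∈ s → u ≠ v → ¬ G.Adj u v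

/-- The independence number of a finite graph. -/
noncomputable def indepNumber {V : Type*} [Fintype V] (G : SimpleGraph V) : ℕ :=
  sSup {k | ∃ s : Finset V, IsIndepFinset G s ∧ s.card = k}

/-- The number `♯α(G)` of maximum independent sets of `G`. -/
noncomputable def numMaxIndep {V : Type*} [Fintype V] (G : SimpleGraph V) : ℕ :=
  Set.ncard {s : Finset V | IsIndepFinset G s ∧ s.card = indepNumber G}

/-- The number `♯α(G,u)` of maximum independent sets of `G` containing `u`. -/
noncomputable def numMaxIndepOn {V : Type*} [Fintype V] (G : SimpleGraph V) (u : V) : ℕ :=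
  Set.ncard {s : Finset V | IsIndepFinset G s ∧ s.card = indepNumber G ∧ u ∈ s}

/-- `g(n,α) = ⌊n/α⌋^(α − n mod α) ⌈n/α⌉^(n mod α)`. -/
def gFun (n a : ℕ) : ℕ := (n / a) ^ (a - n % a) * ((n + a - 1) / a) ^ (n % a)

/-- `t(n,α) = ∏_{i=1}^{α−1} (|C_i| − 1)`, where `|C_i| = ⌊n/α⌋ + 1` for `i < n mod α`
and `|C_i| = ⌊n/α⌋` otherwise. -/
def tFun (n a : ℕ) : ℕ := ∏ i ∈ Finset.Ico 1 a, (n / a + (if i < n % a then 1 else 0) - 1)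

/-- `f(n,α) = g(n−1,α) + t(n,α)`. -/
def fFun (n a : ℕ) : ℕ := gFun (n - 1) a + tFun n a

/-- `G(n,α)`: complement of the Turán graph, i.e. the disjoint union of `α` cliques
(the residue classes mod `α`), each of order `⌈n/α⌉` or `⌊n/α⌋`. -/
def Ggraph (n a : ℕ) : SimpleGraph (Fin n) where
  Adj v w := v ≠ w ∧ v.val % a = w.val % a
  symm := by constructor; intro v w h; exact ⟨h.1.symm, h.2.symm⟩
  loopless := by constructor; intro v h; exact h.1 rfl

/-- `F(n,α)`: `G(n,α)` plus the edges `x₀x₁, …, x₀x_{α−1}`, where `x_i` is the vertex `i`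
of the clique `C_i` (the residue class of `i` mod `α`); `x₀ = 0` is the special cutvertex,
lying in the clique `C₀` of order `⌈n/α⌉`. -/
def Fgraph (n a : ℕ) : SimpleGraph (Fin n) where
  Adj v w := v ≠ w ∧
    (v.val % a = w.val % a ∨ (v.val = 0 ∧ w.val < a) ∨ (w.val = 0 ∧ v.val < a))
  symm := by constructor; intro v w h; exact ⟨h.1.symm, by tauto⟩
  loopless := by constructor; intro v h; exact h.1 rfl

section AuxLemmas


lemma gFun_eval (a q r : ℕ) (ha : 0 < a) (hr : r < a) :
    gFun (a * q + r) a = q ^ (a - r) * (q + 1) ^ r := by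
  unfold gFun
  have h1 : (a * q + r) / a = q := by
    rw [Nat.mul_add_div ha, Nat.div_eq_of_lt hr, add_zero]
  have h2 : (a * q + r) % a = r := by
    rw [Nat.mul_add_mod, Nat.mod_eq_of_lt hr]
  rw [h1, h2]
  rcases Nat.eq_zero_or_pos r with rfl | hr1
  · simp
  · have h3 : (a * q + r + a - 1) / a = q + 1 := by
      have e : a * q + r + a - 1 = a * (q + 1) + (r - 1) := by
        rw [Nat.mul_add, mul_one]; omega
      rw [e, Nat.mul_add_div ha, Nat.div_eq_of_lt (by omega), add_zero]
    rw [h3]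

lemma tFun_eval0 (a q : ℕ) (ha : 0 < a) :
    tFun (a * q) a = (q - 1) ^ (a - 1) := by
  unfold tFun
  have h1 : (a * q) / a = q := Nat.mul_div_cancel_left q ha
  have h2 : (a * q) % a = 0 := Nat.mul_mod_right a q
  rw [h1, h2]
  rw [Finset.prod_congr rfl (fun i _ => by simp : ∀ i ∈ Finset.Ico 1 a, (q + (if i < 0 then 1 else 0) - 1) = q - 1)]
  rw [Finset.prod_const, Nat.card_Ico]

lemma tFun_eval1 (a q r : ℕ) (ha : 0 < a) (hr0 : 1 ≤ r) (hr : r < a) :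
    tFun (a * q + r) a = q ^ (r - 1) * (q - 1) ^ (a - r) := by
  unfold tFun
  have h1 : (a * q + r) / a = q := by
    rw [Nat.mul_add_div ha, Nat.div_eq_of_lt hr, add_zero]
  have h2 : (a * q + r) % a = r := by
    rw [Nat.mul_add_mod, Nat.mod_eq_of_lt hr]
  rw [h1, h2]
  rw [← Finset.prod_Ico_consecutive _ hr0 (le_of_lt hr)]
  have e1 : ∀ i ∈ Finset.Ico 1 r, (q + (if i < r then 1 else 0) - 1) = q := by
    intro i hi; rw [Finset.mem_Ico] at hi; rw [if_pos hi.2]; omega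
  have e2 : ∀ i ∈ Finset.Ico r a, (q + (if i < r then 1 else 0) - 1) = q - 1 := by
    intro i hi; rw [Finset.mem_Ico] at hi; rw [if_neg (by omega)]; omega
  rw [Finset.prod_congr rfl e1, Finset.prod_congr rfl e2,
    Finset.prod_const, Finset.prod_const, Nat.card_Ico, Nat.card_Ico]

lemma prod_map_pred_le (m : Multiset ℕ) : (m.map (· - 1)).prod ≤ m.prod := by
  induction m using Multiset.induction_on with
  | empty => simp
  | cons x s ih =>
    simp only [Multiset.map_cons, Multiset.prod_cons]
    exact Nat.mul_le_mul (Nat.sub_le x 1) ih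

lemma two_val_decomp (u v : ℕ) (huv : u ≠ v) (m : Multiset ℕ)
    (h : ∀ y ∈ m, y = u ∨ y = v) :
    m = Multiset.replicate (m.count u) u + Multiset.replicate (Multiset.card m - m.count u) v := by
  induction m using Multiset.induction_on with
  | empty => simp
  | cons x s ih =>
    have hs : ∀ y ∈ s, y = u ∨ y = v := fun y hy => h y (Multiset.mem_cons_of_mem hy)
    have hcle : s.count u ≤ Multiset.card s := Multiset.count_le_card u s
    rcases h x (Multiset.mem_cons_self x s) with rfl | rfl
    · rw [Multiset.count_cons_self, Multiset.card_cons]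
      have : Multiset.card s + 1 - (s.count x + 1) = Multiset.card s - s.count x := by omega
      rw [this, Multiset.replicate_succ, Multiset.cons_add]
      rw [← ih hs]
    · rw [Multiset.count_cons_of_ne huv, Multiset.card_cons]
      have : Multiset.card s + 1 - s.count u = (Multiset.card s - s.count u) + 1 := by omega
      rw [this, Multiset.replicate_succ]
      rw [Multiset.add_cons, ← ih hs]


def Fval (b : ℕ) (m : Multiset ℕ) : ℕ := (b - 1) * m.prod + (m.map (· - 1)).prod

lemma key_ind : ∀ (N b : ℕ) (m : Multiset ℕ),
    (b^2 + (m.map (·^2)).sum) * (b + m.sum + 1) + m.sum ≤ N →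
    1 ≤ b → (∀ y ∈ m, 1 ≤ y) →
    Fval b m ≤ fFun (b + m.sum) (Multiset.card m + 1) := by
  intro N
  induction N with
  | zero =>
    intro b m hμ hb _
    exfalso
    have h1 : 1 ≤ b^2 := Nat.one_le_iff_ne_zero.mpr (pow_ne_zero 2 (by omega))
    have h2 : 1 ≤ b + m.sum + 1 := by omega
    have h3 : 1 * 1 ≤ (b^2 + (m.map (·^2)).sum) * (b + m.sum + 1) :=
      Nat.mul_le_mul (le_trans h1 (Nat.le_add_right _ _)) h2
    omega
  | succ N ih =>
    intro b m hμ hb hm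
    by_cases h2 : ∃ y ∈ m, y + 2 ≤ b
    · -- move 2 : b → b-1, y → y+1
      obtain ⟨y, hy, hby⟩ := h2
      obtain ⟨rest, rfl⟩ : ∃ rest, m = y ::ₘ rest := ⟨m.erase y, (Multiset.cons_erase hy).symm⟩
      obtain ⟨e, rfl⟩ : ∃ e, b = y + 2 + e := ⟨b - (y+2), by omega⟩
      set P := rest.prod with hP
      set Q := (rest.map (· - 1)).prod with hQ
      set S := (rest.map (·^2)).sum with hS
      set T := rest.sum with hT
      have hsum : (y + 2 + e - 1) + ((y+1) ::ₘ rest).sum = (y + 2 + e) + (y ::ₘ rest).sum := by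
        simp only [Multiset.sum_cons]; omega
      have hcard : Multiset.card ((y+1) ::ₘ rest) = Multiset.card (y ::ₘ rest) := by simp
      have hμ' : ((y+2+e-1)^2 + (((y+1) ::ₘ rest).map (·^2)).sum) * ((y+2+e-1) + ((y+1) ::ₘ rest).sum + 1)
          + ((y+1) ::ₘ rest).sum ≤ N := by
        simp only [Multiset.map_cons, Multiset.sum_cons, ← hS, ← hT] at hμ ⊢
        have e1 : y + 2 + e - 1 = y + 1 + e := by omega
        rw [e1]
        have hsq : (y+1+e)^2 + ((y+1)^2 + S) + 2 ≤ (y+2+e)^2 + (y^2 + S) := by nlinarith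
        have hc : 1 ≤ y + 1 + e + (y + 1 + T) + 1 := by omega
        have hfac : y + 1 + e + (y + 1 + T) + 1 = y + 2 + e + (y + T) + 1 := by omega
        rw [hfac]
        nlinarith [hμ, hsq]
      have hF : Fval (y+2+e) (y ::ₘ rest) ≤ Fval (y+2+e-1) ((y+1) ::ₘ rest) := by
        unfold Fval
        simp only [Multiset.map_cons, Multiset.prod_cons, ← hP, ← hQ]
        have e1 : y + 2 + e - 1 = y + 1 + e := by omega
        rw [e1]
        have e2 : y + 1 + e - 1 = y + e := by omega
        rw [e2]
        have l1 : (y + 1 + e) * (y * P) ≤ (y + e) * ((y+1) * P) := by nlinarith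
        have l2 : (y - 1) * Q ≤ (y + 1 - 1) * Q := by
          apply Nat.mul_le_mul_right; omega
        omega
      calc Fval (y+2+e) (y ::ₘ rest) ≤ Fval (y+2+e-1) ((y+1) ::ₘ rest) := hF
        _ ≤ fFun ((y+2+e-1) + ((y+1) ::ₘ rest).sum) (Multiset.card ((y+1) ::ₘ rest) + 1) := by
            apply ih _ _ hμ' (by omega)
            intro z hz
            rcases Multiset.mem_cons.mp hz with rfl | hz'
            · omega
            · exact hm z (Multiset.mem_cons_of_mem hz')
        _ = fFun ((y+2+e) + (y ::ₘ rest).sum) (Multiset.card (y ::ₘ rest) + 1) := by rw [hsum, hcard]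
    · by_cases h3 : ∃ y ∈ m, b + 1 ≤ y
      · -- move 3 : b → b+1, y → y-1
        obtain ⟨y, hy, hby⟩ := h3
        obtain ⟨rest, rfl⟩ : ∃ rest, m = y ::ₘ rest := ⟨m.erase y, (Multiset.cons_erase hy).symm⟩
        obtain ⟨b', rfl⟩ : ∃ b', b = b' + 1 := ⟨b - 1, by omega⟩
        obtain ⟨d, rfl⟩ : ∃ d, y = b' + 2 + d := ⟨y - (b'+2), by omega⟩
        set P := rest.prod with hP
        set Q := (rest.map (· - 1)).prod with hQ
        set S := (rest.map (·^2)).sum with hS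
        set T := rest.sum with hT
        have hQP : Q ≤ P := prod_map_pred_le rest
        have hμ' : ((b'+2)^2 + (((b'+1+d) ::ₘ rest).map (·^2)).sum) * ((b'+2) + ((b'+1+d) ::ₘ rest).sum + 1)
            + ((b'+1+d) ::ₘ rest).sum ≤ N := by
          simp only [Multiset.map_cons, Multiset.sum_cons, ← hS, ← hT] at hμ ⊢
          have hsq : (b'+2)^2 + ((b'+1+d)^2 + S) ≤ (b'+1)^2 + ((b'+2+d)^2 + S) := by nlinarith
          have hfac : b' + 2 + (b' + 1 + d + T) + 1 = b' + 1 + (b' + 2 + d + T) + 1 := by omega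
          rw [hfac]
          have hc : 1 ≤ b' + 1 + (b' + 2 + d + T) + 1 := by omega
          nlinarith [hμ, hsq]
        have hF : Fval (b'+1) ((b'+2+d) ::ₘ rest) ≤ Fval (b'+2) ((b'+1+d) ::ₘ rest) := by
          unfold Fval
          simp only [Multiset.map_cons, Multiset.prod_cons, ← hP, ← hQ]
          simp only [Nat.add_sub_cancel]
          have e1 : b' + 2 + d - 1 = b' + 1 + d := by omega
          have e2 : b' + 1 + d - 1 = b' + d := by omega
          have e3 : b' + 2 - 1 = b' + 1 := by omega
          rw [e1, e2, e3]
          have hid : (b'+1) * ((b'+1+d) * P) = b' * ((b'+2+d) * P) + (d+1) * P := by ring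
          have hq2 : (b'+1+d) * Q = (b'+d) * Q + Q := by ring
          have hP1 : P ≤ (d+1) * P := Nat.le_mul_of_pos_left P (by omega)
          omega
        have hsum : (b'+2) + ((b'+1+d) ::ₘ rest).sum = (b'+1) + ((b'+2+d) ::ₘ rest).sum := by
          simp only [Multiset.sum_cons]; omega
        have hcard : Multiset.card ((b'+1+d) ::ₘ rest) = Multiset.card ((b'+2+d) ::ₘ rest) := by simp
        calc Fval (b'+1) ((b'+2+d) ::ₘ rest) ≤ Fval (b'+2) ((b'+1+d) ::ₘ rest) := hF
          _ ≤ fFun ((b'+2) + ((b'+1+d) ::ₘ rest).sum) (Multiset.card ((b'+1+d) ::ₘ rest) + 1) := by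
              apply ih _ _ hμ' (by omega)
              intro z hz
              rcases Multiset.mem_cons.mp hz with rfl | hz'
              · omega
              · exact hm z (Multiset.mem_cons_of_mem hz')
          _ = fFun ((b'+1) + ((b'+2+d) ::ₘ rest).sum) (Multiset.card ((b'+2+d) ::ₘ rest) + 1) := by
              rw [hsum, hcard]
      · -- terminal case
        push_neg at h2 h3
        have hval : ∀ y ∈ m, y = b ∨ y = b - 1 := by
          intro y hy
          have := h2 y hy; have := h3 y hy; omega
        have hmrep := two_val_decomp b (b-1) (by omega) m hval
        obtain ⟨k, hk⟩ : ∃ k, m.count b = k := ⟨_, rfl⟩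
        obtain ⟨j, hjj⟩ : ∃ j, Multiset.card m - k = j := ⟨_, rfl⟩
        have hkc : k ≤ Multiset.card m := hk ▸ Multiset.count_le_card b m
        rw [hk, hjj] at hmrep
        have hprod : m.prod = b ^ k * (b-1) ^ j := by
          rw [hmrep]; rw [Multiset.prod_add, Multiset.prod_replicate, Multiset.prod_replicate]
        have hprod2 : (m.map (· - 1)).prod = (b-1) ^ k * (b-2) ^ j := by
          rw [hmrep]
          rw [Multiset.map_add, Multiset.prod_add, Multiset.map_replicate, Multiset.map_replicate,
            Multiset.prod_replicate, Multiset.prod_replicate]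
          rw [show b - 1 - 1 = b - 2 by omega]
        have hsum : m.sum = k * b + j * (b - 1) := by
          rw [hmrep]
          rw [Multiset.sum_add, Multiset.sum_replicate, Multiset.sum_replicate, smul_eq_mul, smul_eq_mul]
        have hcard : Multiset.card m = k + j := by omega
        clear hmrep hk hjj
        rw [Fval, hprod, hprod2, hsum, hcard]
        obtain ⟨b', rfl⟩ : ∃ b', b = b' + 1 := ⟨b - 1, by omega⟩
        simp only [Nat.add_sub_cancel]
        rcases Nat.eq_zero_or_pos j with rfl | hj1
        · -- j = 0, n = (k+1) * (b'+1)
          simp only [pow_zero, mul_one, Nat.mul_zero, Nat.zero_mul, add_zero, Nat.add_zero]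
          rcases Nat.eq_zero_or_pos k with rfl | hk1
          · simp only [pow_zero, mul_one, Nat.zero_mul, Nat.add_zero, Nat.zero_add]
            rw [fFun, gFun, tFun]
            simp [Nat.mod_one]
          · have hn : b' + 1 + k * (b' + 1) = (k+1) * (b'+1) := by ring
            rw [hn]
            have hn1 : (k+1) * (b'+1) - 1 = (k+1) * b' + k := by
              rw [Nat.mul_add, Nat.mul_one, Nat.add_mul, Nat.one_mul]; omega
            rw [fFun, hn1, gFun_eval (k+1) b' k (by omega) (by omega),
              tFun_eval0 (k+1) (b'+1) (by omega)]
            simp only [Nat.add_sub_cancel]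
            rw [show k + 1 - k = 1 by omega]
            apply le_of_eq
            ring
        · -- j ≥ 1 : n = a*(b'+1) - j = a*b' + (k+1), a = k+j+1
          have hn : b' + 1 + (k * (b'+1) + j * b') = (k+j+1) * b' + (k+1) := by ring
          rw [hn]
          have hn1 : (k+j+1) * b' + (k+1) - 1 = (k+j+1) * b' + k := by omega
          rw [fFun, hn1, gFun_eval (k+j+1) b' k (by omega) (by omega),
            tFun_eval1 (k+j+1) b' (k+1) (by omega) (by omega) (by omega)]
          simp only [Nat.add_sub_cancel]
          rw [show k + j + 1 - k = j + 1 by omega, show k + j + 1 - (k+1) = j by omega,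
            show b' + 1 - 2 = b' - 1 by omega]
          apply le_of_eq
          ring

end AuxLemmas

/-- **Lemma 2 (i), inequality part.** Let `0 < α < n` and let `G` be a connected graph of
order `n` and independence number `α` whose vertex set is the disjoint union of the vertex
sets of `α` cliques `C 0, …, C (α−1)`, such that every edge not lying inside one of the
cliques is incident with a fixed vertex `x₀ ∈ C 0`, and `x₀` has exactly one neighbor in
each of the cliques `C 1, …, C (α−1)`. Then `♯α(G) ≤ f(n,α)`. -/
theorem maxIndepSets_le_f_of_cliqueStructure {V : Type*} [Fintype V] (G : SimpleGraph V)
    (n a : ℕ) (ha0 : 0 < a) (han : a < n) (hconn : G.Connected)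
    (hcard : Fintype.card V = n) (hα : indepNumber G = a)
    (C : Fin a → Finset V)
    (hdisj : ∀ i j, i ≠ j → Disjoint (C i) (C j))
    (hcover : ∀ v : V, ∃ i, v ∈ C i)
    (hclique : ∀ i, G.IsClique (C i : Set V))
    (x₀ : V) (hx₀ : x₀ ∈ C ⟨0, ha0⟩)
    (hedge : ∀ u v : V, G.Adj u v → (∃ i, u ∈ C i ∧ v ∈ C i) ∨ u = x₀ ∨ v = x₀)
    (hone : ∀ i, i ≠ ⟨0, ha0⟩ → ∃! z, z ∈ C i ∧ G.Adj x₀ z) :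
    numMaxIndep G ≤ fFun n a := by
  classical
  set i₀ : Fin a := ⟨0, ha0⟩ with hi₀
  -- a maximum independent set exists
  have hattain : ∃ s : Finset V, IsIndepFinset G s ∧ s.card = a := by
    have hne : (0:ℕ) ∈ {k | ∃ s : Finset V, IsIndepFinset G s ∧ s.card = k} :=
      ⟨∅, fun u hu => absurd hu (Finset.notMem_empty u), Finset.card_empty⟩
    have hbdd : BddAbove {k | ∃ s : Finset V, IsIndepFinset G s ∧ s.card = k} := by
      refine ⟨Fintype.card V, ?_⟩
      rintro k ⟨s, _, rfl⟩
      exact Finset.card_le_univ s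
    have hmem := Nat.sSup_mem ⟨0, hne⟩ hbdd
    rw [show sSup {k | ∃ s : Finset V, IsIndepFinset G s ∧ s.card = k} = indepNumber G from rfl,
      hα] at hmem
    exact hmem
  -- every maximum independent set meets each clique in exactly one vertex
  have hinter : ∀ s : Finset V, IsIndepFinset G s → s.card = a → ∀ i, (s ∩ C i).card = 1 := by
    intro s hs hc i
    have hle : ∀ i : Fin a, (s ∩ C i).card ≤ 1 := by
      intro i
      rw [Finset.card_le_one]
      intro u hu v hv
      by_contra hne
      refine hs (Finset.mem_inter.mp hu).1 (Finset.mem_inter.mp hv).1 hne ?_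
      exact hclique i (Finset.mem_inter.mp hu).2 (Finset.mem_inter.mp hv).2 hne
    have hsub : s ⊆ Finset.univ.biUnion (fun i => s ∩ C i) := by
      intro v hv
      obtain ⟨i, hi⟩ := hcover v
      exact Finset.mem_biUnion.mpr ⟨i, Finset.mem_univ _, Finset.mem_inter.mpr ⟨hv, hi⟩⟩
    have hsumge : a ≤ ∑ i : Fin a, (s ∩ C i).card := by
      have h := le_trans (Finset.card_le_card hsub) Finset.card_biUnion_le
      omega
    by_contra hne1
    have h0 : (s ∩ C i).card = 0 := by have := hle i; omega
    have hsplit : ∑ j : Fin a, (s ∩ C j).card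
        = (s ∩ C i).card + ∑ j ∈ Finset.univ.erase i, (s ∩ C j).card :=
      (Finset.add_sum_erase _ _ (Finset.mem_univ i)).symm
    have hrest : ∑ j ∈ Finset.univ.erase i, (s ∩ C j).card ≤ a - 1 := by
      calc ∑ j ∈ Finset.univ.erase i, (s ∩ C j).card
          ≤ ∑ j ∈ Finset.univ.erase i, 1 := Finset.sum_le_sum (fun j _ => hle j)
        _ = (Finset.univ.erase i).card := by rw [Finset.sum_const, smul_eq_mul, mul_one]
        _ = a - 1 := by rw [Finset.card_erase_of_mem (Finset.mem_univ i), Finset.card_univ,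
              Fintype.card_fin]
    omega
  -- each clique is nonempty
  obtain ⟨s₀, hs₀i, hs₀c⟩ := hattain
  have hCpos : ∀ i, 1 ≤ (C i).card := by
    intro i
    have h1 := hinter s₀ hs₀i hs₀c i
    have h2 : (s₀ ∩ C i).card ≤ (C i).card := Finset.card_le_card Finset.inter_subset_right
    omega
  -- the choice function
  have hφex : ∀ s : Finset V, IsIndepFinset G s → s.card = a → ∀ i, ∃ v, s ∩ C i = {v} := by
    intro s hs hc i
    exact Finset.card_eq_one.mp (hinter s hs hc i)
  set φ : Finset V → Fin a → V := fun s i =>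
    if h : ∃ v, s ∩ C i = {v} then h.choose else x₀ with hφdef
  have hφ : ∀ s : Finset V, IsIndepFinset G s → s.card = a → ∀ i, s ∩ C i = {φ s i} := by
    intro s hs hc i
    have hex := hφex s hs hc i
    simp only [hφdef, dif_pos hex]
    exact hex.choose_spec
  have hφmem : ∀ s : Finset V, IsIndepFinset G s → s.card = a → ∀ i, φ s i ∈ s ∩ C i := by
    intro s hs hc i
    rw [hφ s hs hc i]
    exact Finset.mem_singleton_self _
  have hrecover : ∀ s : Finset V, IsIndepFinset G s → s.card = a →
      s = Finset.image (φ s) Finset.univ := by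
    intro s hs hc
    ext v
    constructor
    · intro hv
      obtain ⟨i, hi⟩ := hcover v
      have : v ∈ s ∩ C i := Finset.mem_inter.mpr ⟨hv, hi⟩
      rw [hφ s hs hc i, Finset.mem_singleton] at this
      exact Finset.mem_image.mpr ⟨i, Finset.mem_univ i, this.symm⟩
    · intro hv
      obtain ⟨i, _, rfl⟩ := Finset.mem_image.mp hv
      exact (Finset.mem_inter.mp (hφmem s hs hc i)).1
  -- neighbours of x₀
  have hzex : ∀ i : Fin a, i ≠ i₀ → ∃ v, v ∈ C i ∧ G.Adj x₀ v := fun i hi =>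
    (hone i hi).exists
  set z : Fin a → V := fun i => if h : ∃ v, v ∈ C i ∧ G.Adj x₀ v then h.choose else x₀ with hzdef
  have hz : ∀ i : Fin a, i ≠ i₀ → z i ∈ C i ∧ G.Adj x₀ (z i) := by
    intro i hi
    have hex := hzex i hi
    simp only [hzdef, dif_pos hex]
    exact hex.choose_spec
  -- the two target finsets of functions
  set D₁ : Fin a → Finset V := fun i => if i = i₀ then {x₀} else (C i).erase (z i) with hD₁
  set D₂ : Fin a → Finset V := fun i => if i = i₀ then (C i₀).erase x₀ else C i with hD₂
  set S₁ : Set (Finset V) := {s | (IsIndepFinset G s ∧ s.card = indepNumber G) ∧ x₀ ∈ s} with hS₁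
  set S₂ : Set (Finset V) := {s | (IsIndepFinset G s ∧ s.card = indepNumber G) ∧ x₀ ∉ s} with hS₂
  have hinj : ∀ T : Set (Finset V),
      (∀ s ∈ T, IsIndepFinset G s ∧ s.card = a) → Set.InjOn φ T := by
    intro T hT s hs t ht hst
    rw [hrecover s (hT s hs).1 (hT s hs).2, hrecover t (hT t ht).1 (hT t ht).2, hst]
  have hprop : ∀ s : Finset V, IsIndepFinset G s ∧ s.card = indepNumber G →
      IsIndepFinset G s ∧ s.card = a := by
    intro s hs
    exact ⟨hs.1, by rw [hs.2, hα]⟩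
  -- counting S₁
  have hcount1 : S₁.ncard ≤ (Fintype.piFinset D₁).card := by
    have hsub : φ '' S₁ ⊆ ↑(Fintype.piFinset D₁) := by
      rintro f ⟨s, hsS, rfl⟩
      obtain ⟨⟨hsi, hsc⟩, hx⟩ := hsS
      have hsa := (hprop s ⟨hsi, hsc⟩).2
      simp only [Finset.coe_mem, Set.mem_setOf_eq, Finset.mem_coe, Fintype.mem_piFinset]
      intro i
      by_cases hii : i = i₀
      · subst hii
        have hx0 : x₀ ∈ s ∩ C i₀ := Finset.mem_inter.mpr ⟨hx, hx₀⟩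
        rw [hφ s hsi hsa i₀] at hx0
        rw [Finset.mem_singleton] at hx0
        simp only [hD₁, if_pos rfl]
        rw [Finset.mem_singleton]
        exact hx0.symm
      · simp only [hD₁, if_neg hii]
        have hmem := hφmem s hsi hsa i
        refine Finset.mem_erase.mpr ⟨?_, (Finset.mem_inter.mp hmem).2⟩
        intro heq
        have hadj : G.Adj x₀ (φ s i) := heq ▸ (hz i hii).2
        have hne : x₀ ≠ φ s i := G.ne_of_adj hadj
        exact hsi hx (Finset.mem_inter.mp hmem).1 hne hadj
    calc S₁.ncard = (φ '' S₁).ncard :=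
          (Set.ncard_image_of_injOn (hinj S₁ (fun s hs => hprop s hs.1))).symm
      _ ≤ (↑(Fintype.piFinset D₁) : Set (Fin a → V)).ncard :=
          Set.ncard_le_ncard hsub (Set.toFinite _)
      _ = (Fintype.piFinset D₁).card := Set.ncard_coe_finset _
  -- counting S₂
  have hcount2 : S₂.ncard ≤ (Fintype.piFinset D₂).card := by
    have hsub : φ '' S₂ ⊆ ↑(Fintype.piFinset D₂) := by
      rintro f ⟨s, hsS, rfl⟩
      obtain ⟨⟨hsi, hsc⟩, hx⟩ := hsS
      have hsa := (hprop s ⟨hsi, hsc⟩).2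
      simp only [Finset.coe_mem, Set.mem_setOf_eq, Finset.mem_coe, Fintype.mem_piFinset]
      intro i
      have hmem := hφmem s hsi hsa i
      by_cases hii : i = i₀
      · subst hii
        simp only [hD₂, if_pos rfl]
        refine Finset.mem_erase.mpr ⟨?_, (Finset.mem_inter.mp hmem).2⟩
        intro heq
        exact hx (heq ▸ (Finset.mem_inter.mp hmem).1)
      · simp only [hD₂, if_neg hii]
        exact (Finset.mem_inter.mp hmem).2
    calc S₂.ncard = (φ '' S₂).ncard :=
          (Set.ncard_image_of_injOn (hinj S₂ (fun s hs => hprop s hs.1))).symm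
      _ ≤ (↑(Fintype.piFinset D₂) : Set (Fin a → V)).ncard :=
          Set.ncard_le_ncard hsub (Set.toFinite _)
      _ = (Fintype.piFinset D₂).card := Set.ncard_coe_finset _
  -- split numMaxIndep
  have hunion : numMaxIndep G ≤ S₁.ncard + S₂.ncard := by
    rw [numMaxIndep]
    have : {s : Finset V | IsIndepFinset G s ∧ s.card = indepNumber G} = S₁ ∪ S₂ := by
      ext s
      simp only [hS₁, hS₂, Set.mem_union, Set.mem_setOf_eq]
      tauto
    rw [this]
    exact Set.ncard_union_le _ _
  -- compute the cardinalities of the products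
  have hc1 : (Fintype.piFinset D₁).card = ∏ i ∈ Finset.univ.erase i₀, ((C i).card - 1) := by
    rw [Fintype.card_piFinset]
    rw [← Finset.mul_prod_erase Finset.univ _ (Finset.mem_univ i₀)]
    have h1 : (D₁ i₀).card = 1 := by simp [hD₁]
    rw [h1, one_mul]
    refine Finset.prod_congr rfl ?_
    intro i hi
    have hii : i ≠ i₀ := (Finset.mem_erase.mp hi).1
    simp only [hD₁, if_neg hii]
    rw [Finset.card_erase_of_mem (hz i hii).1]
  have hc2 : (Fintype.piFinset D₂).card
      = ((C i₀).card - 1) * ∏ i ∈ Finset.univ.erase i₀, (C i).card := by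
    rw [Fintype.card_piFinset]
    rw [← Finset.mul_prod_erase Finset.univ _ (Finset.mem_univ i₀)]
    have h1 : (D₂ i₀).card = (C i₀).card - 1 := by
      simp only [hD₂, if_pos rfl]
      rw [Finset.card_erase_of_mem hx₀]
    rw [h1]
    congr 1
    refine Finset.prod_congr rfl ?_
    intro i hi
    simp only [hD₂, if_neg (Finset.mem_erase.mp hi).1]
  -- total sum of clique sizes is n
  have hsumcard : ∑ i : Fin a, (C i).card = n := by
    rw [← hcard, ← Finset.card_univ]
    have huniv : (Finset.univ : Finset V) = Finset.univ.biUnion C := by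
      ext v
      simp only [Finset.mem_biUnion, Finset.mem_univ, true_iff]
      obtain ⟨i, hi⟩ := hcover v
      exact ⟨i, trivial, hi⟩
    rw [huniv, Finset.card_biUnion (fun i _ j _ hij => hdisj i j hij)]
  -- package as multiset and apply the key lemma
  set m : Multiset ℕ := (Finset.univ.erase i₀).val.map (fun i => (C i).card) with hm
  have hmprod : m.prod = ∏ i ∈ Finset.univ.erase i₀, (C i).card := rfl
  have hmprod2 : (m.map (· - 1)).prod = ∏ i ∈ Finset.univ.erase i₀, ((C i).card - 1) := by
    rw [hm, Multiset.map_map]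
    rfl
  have hmcard : Multiset.card m = a - 1 := by
    rw [hm, Multiset.card_map]
    change (Finset.univ.erase i₀).card = a - 1
    rw [Finset.card_erase_of_mem (Finset.mem_univ i₀), Finset.card_univ, Fintype.card_fin]
  have hmsum : (C i₀).card + m.sum = n := by
    have h1 : m.sum = ∑ i ∈ Finset.univ.erase i₀, (C i).card := rfl
    have h2 := Finset.add_sum_erase Finset.univ (fun i => (C i).card) (Finset.mem_univ i₀)
    omega
  have hmpos : ∀ y ∈ m, 1 ≤ y := by
    intro y hy
    rw [hm, Multiset.mem_map] at hy
    obtain ⟨i, _, rfl⟩ := hy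
    exact hCpos i
  have hkey := key_ind (((C i₀).card^2 + (m.map (·^2)).sum) * ((C i₀).card + m.sum + 1) + m.sum)
    ((C i₀).card) m (le_refl _) (hCpos i₀) hmpos
  calc numMaxIndep G ≤ S₁.ncard + S₂.ncard := hunion
    _ ≤ (Fintype.piFinset D₁).card + (Fintype.piFinset D₂).card :=
        Nat.add_le_add hcount1 hcount2
    _ = Fval (C i₀).card m := by
        rw [hc1, hc2, Fval, hmprod, hmprod2]
        omega
    _ ≤ fFun ((C i₀).card + m.sum) (Multiset.card m + 1) := hkey
    _ = fFun n a := by rw [hmsum, hmcard]; congr 1; omega
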